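/- (Theorem 2, linear convergence rate of the FLB-based US algorithm.) Let Θ ⊆ ℝ be an open interval, let g : Θ → ℝ be continuously differentiable, let b : Θ → ℝ be continuous, and let θ* ∈ Θ satisfy g(θ*) = 0 and b(θ*) < 0. Suppose (θ^(t))_{t≥0} is a sequence in Θ with θ^(t) ≠ θ* for all t, θ^(t) → θ*, and g(θ^(t)) + ∫_{θ^(t)}^{θ^(t+1)} b(z) dz = 0 for every t. Then lim_{t→∞} |θ^(t+1) − θ*| / |θ^(t) − θ*| = |1 − g'(θ*)/b(θ*)|; moreover, if b(θ*) < g'(θ*) < 0 then this limit lies strictly between 0 and 1. -/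

import Mathlib

open Filter MeasureTheory intervalIntegral

/-- Theorem 2, linear convergence rate of the FLB-based US algorithm:
for a continuously differentiable `g` on an open interval `Θ`, a continuous FLB
function `b` with `b(θ*) < 0`, and a US sequence `θ^(t) → θ*` (with `θ^(t) ≠ θ*`)
satisfying `g(θ^(t)) + ∫_{θ^(t)}^{θ^(t+1)} b(z) dz = 0`, the convergence is linear with
rate `|1 − g'(θ*)/b(θ*)|`; if moreover `b(θ*) < g'(θ*) < 0`, this rate lies in `(0, 1)`. -/
theorem stmt_9 (Θ : Set ℝ) (hΘopen : IsOpen Θ) (hΘ : Θ.OrdConnected)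
    (g g' b : ℝ → ℝ)
    (hderiv : ∀ θ ∈ Θ, HasDerivAt g (g' θ) θ)
    (hcontderiv : ContinuousOn g' Θ)
    (hbcont : ContinuousOn b Θ)
    (θstar : ℝ) (hθstar : θstar ∈ Θ) (hroot : g θstar = 0) (hbneg : b θstar < 0)
    (θ : ℕ → ℝ) (hmem : ∀ t, θ t ∈ Θ) (hne : ∀ t, θ t ≠ θstar)
    (hconv : Filter.Tendsto θ Filter.atTop (nhds θstar))
    (hiter : ∀ t, g (θ t) + ∫ z in (θ t)..(θ (t + 1)), b z = 0) :
    Filter.Tendsto (fun t => |θ (t + 1) - θstar| / |θ t - θstar|) Filter.atTop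
      (nhds |1 - g' θstar / b θstar|) ∧
      (b θstar < g' θstar → g' θstar < 0 →
        0 < |1 - g' θstar / b θstar| ∧ |1 - g' θstar / b θstar| < 1) := by
  have hbne : b θstar ≠ 0 := ne_of_lt hbneg
  set B : ℝ → ℝ := fun x => ∫ z in θstar..x, b z with hBdef
  have hint : ∀ x ∈ Θ, ∀ y ∈ Θ, IntervalIntegrable b volume x y := fun x hx y hy =>
    (hbcont.mono (hΘ.uIcc_subset hx hy)).intervalIntegrable
  -- recursion for B
  have hBrel : ∀ t, B (θ (t + 1)) = B (θ t) - g (θ t) := by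
    intro t
    have h1 := hint _ hθstar _ (hmem t)
    have h2 := hint _ (hmem t) _ (hmem (t + 1))
    have hadd := intervalIntegral.integral_add_adjacent_intervals h1 h2
    have hit := hiter t
    simp only [hBdef]
    linarith [hadd, hit]
  have hB0 : B θstar = 0 := intervalIntegral.integral_same
  -- derivative of B at θstar
  have hBd : HasDerivAt B (b θstar) θstar := by
    apply intervalIntegral.integral_hasDerivAt_right (hint _ hθstar _ hθstar)
    · exact AEStronglyMeasurable.stronglyMeasurableAtFilter_of_mem
        ((hbcont.aestronglyMeasurable hΘopen.measurableSet))
        (hΘopen.mem_nhds hθstar)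
    · exact hbcont.continuousAt (hΘopen.mem_nhds hθstar)
  have hgd : HasDerivAt g (g' θstar) θstar := hderiv θstar hθstar
  -- slopes
  have hslopeB : Tendsto (fun x => B x / (x - θstar)) (nhdsWithin θstar {θstar}ᶜ)
      (nhds (b θstar)) := by
    have := hasDerivAt_iff_tendsto_slope.mp hBd
    refine this.congr fun x => ?_
    simp [slope_def_field, hB0]
  have hslopeG : Tendsto (fun x => g x / (x - θstar)) (nhdsWithin θstar {θstar}ᶜ)
      (nhds (g' θstar)) := by
    have := hasDerivAt_iff_tendsto_slope.mp hgd
    refine this.congr fun x => ?_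
    simp [slope_def_field, hroot]
  -- sequence tendsto within
  have hθt : Tendsto θ atTop (nhdsWithin θstar {θstar}ᶜ) :=
    tendsto_nhdsWithin_of_tendsto_nhds_of_eventually_within _ hconv
      (Filter.Eventually.of_forall fun t => hne t)
  have hθt1 : Tendsto (fun t => θ (t + 1)) atTop (nhdsWithin θstar {θstar}ᶜ) :=
    hθt.comp (tendsto_add_atTop_nat 1)
  -- key limits
  have hC : Tendsto (fun t => B (θ (t + 1)) / (θ (t + 1) - θstar)) atTop
      (nhds (b θstar)) := hslopeB.comp hθt1
  have hA : Tendsto (fun t => B (θ (t + 1)) / (θ t - θstar)) atTop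
      (nhds (b θstar - g' θstar)) := by
    have h1 : Tendsto (fun t => B (θ t) / (θ t - θstar) - g (θ t) / (θ t - θstar)) atTop
        (nhds (b θstar - g' θstar)) := (hslopeB.comp hθt).sub (hslopeG.comp hθt)
    refine h1.congr fun t => ?_
    rw [hBrel t, sub_div]
  have hratio : Tendsto (fun t => (θ (t + 1) - θstar) / (θ t - θstar)) atTop
      (nhds ((b θstar - g' θstar) / b θstar)) := by
    have hdiv := hA.div hC hbne
    refine hdiv.congr' ?_
    filter_upwards [hC.eventually_ne hbne] with t hCt
    have hBne : B (θ (t + 1)) ≠ 0 := by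
      intro h; apply hCt; rw [h, zero_div]
    have hu1 : θ (t + 1) - θstar ≠ 0 := sub_ne_zero.mpr (hne (t + 1))
    have hu0 : θ t - θstar ≠ 0 := sub_ne_zero.mpr (hne t)
    rw [Pi.div_apply]
    field_simp
  have hrate : (b θstar - g' θstar) / b θstar = 1 - g' θstar / b θstar := by
    field_simp
  constructor
  · have habs : Tendsto (fun t => |(θ (t + 1) - θstar) / (θ t - θstar)|) atTop
        (nhds |1 - g' θstar / b θstar|) := by
      rw [← hrate]
      exact (continuous_abs.tendsto _).comp hratio
    refine habs.congr fun t => ?_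
    rw [abs_div]
  · intro h1 h2
    have h3 : 0 < g' θstar / b θstar := div_pos_of_neg_of_neg h2 hbneg
    have h4 : g' θstar / b θstar < 1 := by
      rw [div_lt_iff_of_neg hbneg]
      linarith
    rw [abs_of_pos (by linarith)]
    constructor <;> linarith
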